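/- Let u, v be C¹ functions on B_ρⁿ(0) ⊂ ℝⁿ, and let X = v·e_{n+1} on ℝ^{n+1} (v extended independently of the last coordinate). Let P be the orthogonal projection of ℝ^{n+1} onto the tangent space of graph(u) at (x, u(x)). Then the operator norm of DX ∘ P satisfies ‖DX ∘ P‖ = √((1+|Du|²)|Dv|² − (Du·Dv)²) / √(1+|Du|²), and in particular ‖DX ∘ P‖ ≥ |Dv| / √(1+|Du|²). -/

import Mathlib

open MeasureTheory Metric Set Filter
open scoped ENNReal Topology RealInnerProductSpace

set_option maxHeartbeats 10000000 in
set_option synthInstance.maxHeartbeats 400000 in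
/-- For `X = v·e_{n+1}` and `P` the orthogonal projection onto the
tangent space of `graph u` at `(x, u x)` (the orthogonal complement of the normal
`ν = (Du,-1)/√(1+|Du|²)`), the operator norm of `DX ∘ P` equals
`√((1+|Du|²)|Dv|² − (Du·Dv)²)/√(1+|Du|²)`, and in particular is at least
`|Dv|/√(1+|Du|²)`. -/
theorem stmt1 (n : ℕ) (ρ : ℝ) (hρ : 0 < ρ)
    (u v : EuclideanSpace ℝ (Fin n) → ℝ)
    (hu : ContDiffOn ℝ 1 u (ball 0 ρ)) (hv : ContDiff ℝ 1 v)
    (x : EuclideanSpace ℝ (Fin n)) (hx : x ∈ ball (0 : EuclideanSpace ℝ (Fin n)) ρ)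
    (X : WithLp 2 (EuclideanSpace ℝ (Fin n) × ℝ) → WithLp 2 (EuclideanSpace ℝ (Fin n) × ℝ))
    (hX : X = fun y =>
      (WithLp.equiv 2 (EuclideanSpace ℝ (Fin n) × ℝ)).symm
        (0, v (WithLp.equiv 2 (EuclideanSpace ℝ (Fin n) × ℝ) y).1))
    (p : WithLp 2 (EuclideanSpace ℝ (Fin n) × ℝ))
    (hp : p = (WithLp.equiv 2 (EuclideanSpace ℝ (Fin n) × ℝ)).symm (x, u x))
    (ν : WithLp 2 (EuclideanSpace ℝ (Fin n) × ℝ))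
    (hν : ν = (Real.sqrt (1 + ‖gradient u x‖ ^ 2))⁻¹ •
      (WithLp.equiv 2 (EuclideanSpace ℝ (Fin n) × ℝ)).symm (gradient u x, -1))
    (P : WithLp 2 (EuclideanSpace ℝ (Fin n) × ℝ) →L[ℝ] WithLp 2 (EuclideanSpace ℝ (Fin n) × ℝ))
    (hP : P = ((ℝ ∙ ν)ᗮ).subtypeL.comp (Submodule.orthogonalProjectionOnto (ℝ ∙ ν)ᗮ)) :
    ‖(fderiv ℝ X p).comp P‖
        = Real.sqrt ((1 + ‖gradient u x‖ ^ 2) * ‖gradient v x‖ ^ 2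
            - ⟪gradient u x, gradient v x⟫ ^ 2) / Real.sqrt (1 + ‖gradient u x‖ ^ 2)
      ∧ ‖(fderiv ℝ X p).comp P‖
        ≥ ‖gradient v x‖ / Real.sqrt (1 + ‖gradient u x‖ ^ 2) := by
  classical
  set a := gradient u x with ha
  set b := gradient v x with hb
  set s := Real.sqrt (1 + ‖a‖ ^ 2) with hs
  have h1a : (0:ℝ) < 1 + ‖a‖ ^ 2 := by positivity
  have hspos : 0 < s := Real.sqrt_pos.2 h1a
  have hs2 : s ^ 2 = 1 + ‖a‖ ^ 2 := Real.sq_sqrt h1a.le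
  set L := WithLp.prodContinuousLinearEquiv 2 ℝ (EuclideanSpace ℝ (Fin n)) ℝ with hL
  set g : WithLp 2 (EuclideanSpace ℝ (Fin n) × ℝ) :=
    (WithLp.equiv 2 (EuclideanSpace ℝ (Fin n) × ℝ)).symm (b, 0) with hg
  set e : WithLp 2 (EuclideanSpace ℝ (Fin n) × ℝ) :=
    (WithLp.equiv 2 (EuclideanSpace ℝ (Fin n) × ℝ)).symm (0, 1) with he
  set m : WithLp 2 (EuclideanSpace ℝ (Fin n) × ℝ) :=
    (WithLp.equiv 2 (EuclideanSpace ℝ (Fin n) × ℝ)).symm (a, -1) with hm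
  have hbd : DifferentiableAt ℝ v x := (hv.differentiable one_ne_zero).differentiableAt
  have hder : ∀ z, fderiv ℝ v x z = ⟪b, z⟫ := fun z =>
    (InnerProductSpace.toDual_symm_apply).symm
  -- the derivative of X
  set D : WithLp 2 (EuclideanSpace ℝ (Fin n) × ℝ) →L[ℝ]
      WithLp 2 (EuclideanSpace ℝ (Fin n) × ℝ) :=
    ((L.symm : (EuclideanSpace ℝ (Fin n) × ℝ) →L[ℝ] _).comp
      (((0 : (EuclideanSpace ℝ (Fin n) × ℝ) →L[ℝ] EuclideanSpace ℝ (Fin n))).prod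
        ((fderiv ℝ v x).comp (ContinuousLinearMap.fst ℝ _ ℝ)))).comp
      (L : _ →L[ℝ] (EuclideanSpace ℝ (Fin n) × ℝ)) with hD
  have hXd : HasFDerivAt X D p := by
    have hLp : (L p).1 = x := by rw [hp]; rfl
    have hv2 : HasFDerivAt v (fderiv ℝ v x) (L p).1 := by rw [hLp]; exact hbd.hasFDerivAt
    have h1 : HasFDerivAt
        (fun z : EuclideanSpace ℝ (Fin n) × ℝ => ((0 : EuclideanSpace ℝ (Fin n)), v z.1))
        (((0 : (EuclideanSpace ℝ (Fin n) × ℝ) →L[ℝ] EuclideanSpace ℝ (Fin n))).prod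
          ((fderiv ℝ v x).comp (ContinuousLinearMap.fst ℝ _ ℝ))) (L p) :=
      (hasFDerivAt_const _ _).prodMk (hv2.comp _ hasFDerivAt_fst)
    have h2 := ((L.symm.hasFDerivAt).comp (L p) h1).comp p (L.hasFDerivAt)
    rw [hX]
    exact h2
  have hfd : fderiv ℝ X p = D := hXd.fderiv
  -- symmetry of the projection
  have hPsym : ∀ w, ⟪g, P w⟫ = ⟪P g, w⟫ := by
    intro w
    rw [hP]
    exact (Submodule.inner_starProjection_left_eq_right (ℝ ∙ ν)ᗮ g w).symm
  -- the key identity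
  have key : (fderiv ℝ X p).comp P = (innerSL ℝ (P g)).smulRight e := by
    rw [hfd]
    ext w
    have h1 : (D.comp P) w =
        (WithLp.equiv 2 (EuclideanSpace ℝ (Fin n) × ℝ)).symm
          (0, fderiv ℝ v x (P w).fst) := rfl
    have h2 : ((innerSL ℝ (P g)).smulRight e) w = ⟪P g, w⟫ • e := by
      rw [ContinuousLinearMap.smulRight_apply, innerSL_apply_apply]
    have h3 : ⟪P g, w⟫ • e =
        (WithLp.equiv 2 (EuclideanSpace ℝ (Fin n) × ℝ)).symm (0, ⟪P g, w⟫) := by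
      rw [he, WithLp.equiv_symm_apply, ← WithLp.toLp_smul, Prod.smul_mk, smul_zero, smul_eq_mul, mul_one]
    have h4 : ⟪g, P w⟫ = ⟪b, (P w).fst⟫ := by
      rw [WithLp.prod_inner_apply, hg, WithLp.equiv_symm_apply, WithLp.ofLp_toLp,
        inner_zero_left, add_zero]
      rfl
    rw [h1, h2, h3, ← hPsym, h4, hder]
  -- norms of the basic vectors
  have hnorme : ‖e‖ = 1 := by
    rw [he, WithLp.equiv_symm_apply, WithLp.norm_toLp_snd]; exact norm_one
  have hnormg : ‖g‖ = ‖b‖ := by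
    rw [hg, WithLp.equiv_symm_apply, WithLp.norm_toLp_fst]
  have hmsq : ‖m‖ ^ 2 = 1 + ‖a‖ ^ 2 := by
    rw [← real_inner_self_eq_norm_sq, hm, WithLp.prod_inner_apply, WithLp.equiv_symm_apply,
      WithLp.ofLp_toLp, real_inner_self_eq_norm_sq]
    norm_num [RCLike.inner_apply]
    ring
  have hnormm : ‖m‖ = s := by
    rw [← Real.sqrt_sq (norm_nonneg m), hmsq]
  have hnormν : ‖ν‖ = 1 := by
    rw [hν, norm_smul, hnormm, Real.norm_eq_abs, abs_of_pos (inv_pos.2 hspos)]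
    field_simp
  have hinnerνg : ⟪ν, g⟫ = ⟪a, b⟫ / s := by
    rw [hν, real_inner_smul_left, hm, hg, WithLp.prod_inner_apply,
      WithLp.equiv_symm_apply, WithLp.ofLp_toLp, WithLp.ofLp_toLp,
      inner_zero_right, add_zero, div_eq_inv_mul]
  have hPg : P g = g - ⟪ν, g⟫ • ν := by
    rw [hP, ContinuousLinearMap.comp_apply, Submodule.subtypeL_apply,
      Submodule.coe_orthogonalProjectionOnto_apply, Submodule.starProjection_orthogonal_val,
      Submodule.starProjection_singleton, hnormν]
    norm_num
  have hPg2 : ‖P g‖ ^ 2 = ‖b‖ ^ 2 - (⟪a, b⟫ / s) ^ 2 := by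
    have hgsmul : ⟪g, (⟪ν, g⟫ : ℝ) • ν⟫ = (⟪a, b⟫ / s) ^ 2 := by
      have hc : ⟪g, ν⟫ = ⟪a, b⟫ / s := by rw [real_inner_comm]; exact hinnerνg
      rw [real_inner_smul_right, hinnerνg, hc]; ring
    have hnsmul : ‖(⟪ν, g⟫ : ℝ) • ν‖ ^ 2 = (⟪a, b⟫ / s) ^ 2 := by
      rw [norm_smul, hnormν, mul_one, Real.norm_eq_abs, sq_abs, hinnerνg]
    rw [hPg, norm_sub_sq_real, hgsmul, hnsmul, hnormg]; ring
  -- main norm computation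
  have hmain : ‖(fderiv ℝ X p).comp P‖ = ‖P g‖ := by
    rw [key, ContinuousLinearMap.norm_smulRight_apply, innerSL_apply_norm, hnorme, mul_one]
  set N := (1 + ‖a‖ ^ 2) * ‖b‖ ^ 2 - ⟪a, b⟫ ^ 2 with hN
  have hPg2' : ‖P g‖ ^ 2 = N / s ^ 2 := by
    rw [hPg2, hN, ← hs2, div_pow]
    field_simp
  have hNnn : 0 ≤ N := by
    have h2 : N = ‖P g‖ ^ 2 * s ^ 2 := by
      rw [hPg2']
      field_simp
    rw [h2]; positivity
  have hfinal : ‖P g‖ = Real.sqrt N / s := by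
    rw [← Real.sqrt_sq (norm_nonneg (P g)), hPg2', Real.sqrt_div hNnn,
      Real.sqrt_sq hspos.le]
  constructor
  · rw [hmain, hfinal]
  · rw [hmain, hfinal]
    have hcs : ⟪a, b⟫ ^ 2 ≤ ‖a‖ ^ 2 * ‖b‖ ^ 2 := by
      nlinarith [abs_real_inner_le_norm a b, abs_nonneg (⟪a, b⟫ : ℝ), sq_abs (⟪a, b⟫ : ℝ),
        norm_nonneg a, norm_nonneg b]
    have hb2 : ‖b‖ ^ 2 ≤ N := by rw [hN]; nlinarith
    have hsq : ‖b‖ ≤ Real.sqrt N := by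
      rw [← Real.sqrt_sq (norm_nonneg b)]
      exact Real.sqrt_le_sqrt hb2
    rw [ge_iff_le, div_le_div_iff_of_pos_right hspos]
    exact hsq
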